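/- arXiv:2006.14769 — 2 statements merged into one kernel-verified Lean document; each statement's English description precedes it below -/
import Mathlib

section
/- On a probability space, let ξ be a random variable with P(ξ = 1) = P(ξ = −1) = 1/2, and let (B, φ, s, t, C) be real random variables independent of ξ with s ≥ 0, t ≥ 0 and C > 0 almost surely and E[|φ| t] < ∞. With σ_C(x) = exp(x)/(exp(x) + C), the random variable Z = φ t ξ σ_C(B + φ s ξ) is integrable and E[Z] ≥ 0. (A precise form of Lemma B.1 of the paper: the expected product of a symmetric random sign, a nonnegative mask factor, a feature value, and the resulting softmax probability of a superfluous neuron is nonnegative.) -/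
open MeasureTheory

/-- `σ_c` is monotone in the logit when `c > 0`. -/
lemma sigma_mono_aux {c a b : ℝ} (hc : 0 < c) (hab : a ≤ b) :
    Real.exp a / (Real.exp a + c) ≤ Real.exp b / (Real.exp b + c) := by
  have ha : (0:ℝ) < Real.exp a + c := by positivity
  have hb : (0:ℝ) < Real.exp b + c := by positivity
  rw [div_le_div_iff₀ ha hb]
  have h := Real.exp_le_exp.2 hab
  nlinarith [Real.exp_pos a, Real.exp_pos b]

lemma sigma_bounds_aux {c x : ℝ} (hc : 0 < c) :
    0 ≤ Real.exp x / (Real.exp x + c) ∧ Real.exp x / (Real.exp x + c) ≤ 1 := by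
  have h : (0:ℝ) < Real.exp x + c := by positivity
  constructor
  · positivity
  · rw [div_le_one h]; nlinarith [Real.exp_pos x]

/-- **Lemma B.1, precise form.** Let `ξ` be a fair random sign
(`P(ξ = 1) = P(ξ = -1) = 1/2`) and let `(B, φ, s, t, C)` be real random
variables independent of `ξ` with `s ≥ 0`, `t ≥ 0`, `C > 0` almost surely and
`E[|φ| t] < ∞`. With `σ_C(x) = exp x / (exp x + C)`, the random variable
`Z = φ t ξ σ_C (B + φ s ξ)` is integrable and `E[Z] ≥ 0`. -/
theorem expectation_sign_sigmoid_nonneg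
    {Ω : Type*} [MeasurableSpace Ω] (μ : Measure Ω) [IsProbabilityMeasure μ]
    (ξ B φ s t C : Ω → ℝ)
    (hξm : Measurable ξ) (hBm : Measurable B) (hφm : Measurable φ)
    (hsm : Measurable s) (htm : Measurable t) (hCm : Measurable C)
    (hξ1 : μ (ξ ⁻¹' {1}) = 1 / 2) (hξneg1 : μ (ξ ⁻¹' {-1}) = 1 / 2)
    (hindep : ProbabilityTheory.IndepFun ξ (fun ω => (B ω, φ ω, s ω, t ω, C ω)) μ)
    (hs0 : ∀ᵐ ω ∂μ, 0 ≤ s ω) (ht0 : ∀ᵐ ω ∂μ, 0 ≤ t ω) (hC0 : ∀ᵐ ω ∂μ, 0 < C ω)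
    (hint : Integrable (fun ω => |φ ω| * t ω) μ) :
    Integrable (fun ω => φ ω * t ω * ξ ω *
        (Real.exp (B ω + φ ω * s ω * ξ ω) /
          (Real.exp (B ω + φ ω * s ω * ξ ω) + C ω))) μ ∧
    0 ≤ ∫ ω, φ ω * t ω * ξ ω *
        (Real.exp (B ω + φ ω * s ω * ξ ω) /
          (Real.exp (B ω + φ ω * s ω * ξ ω) + C ω)) ∂μ := by
  -- ξ takes values in {1, -1} almost surely
  have hdisj : Disjoint (ξ ⁻¹' {1}) (ξ ⁻¹' {-1}) := by
    rw [Set.disjoint_left]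
    intro ω h1 h2
    simp only [Set.mem_preimage, Set.mem_singleton_iff] at h1 h2
    rw [h1] at h2; norm_num at h2
  have hunion : μ (ξ ⁻¹' {1} ∪ ξ ⁻¹' {-1}) = 1 := by
    rw [measure_union hdisj (hξm (measurableSet_singleton _)), hξ1, hξneg1,
      ENNReal.div_add_div_same]
    rw [one_add_one_eq_two]
    exact ENNReal.div_self two_ne_zero ENNReal.ofNat_ne_top
  have hξae : ∀ᵐ ω ∂μ, ξ ω = 1 ∨ ξ ω = -1 := by
    rw [MeasureTheory.ae_iff]
    have : {ω | ¬(ξ ω = 1 ∨ ξ ω = -1)} = (ξ ⁻¹' {1} ∪ ξ ⁻¹' {-1})ᶜ := by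
      ext ω; simp [not_or]
    rw [this, measure_compl ((hξm (measurableSet_singleton _)).union
      (hξm (measurableSet_singleton _))) (measure_ne_top μ _), hunion]
    simp
  -- the sigmoid abbreviations
  set σp : Ω → ℝ := fun ω => Real.exp (B ω + φ ω * s ω) /
      (Real.exp (B ω + φ ω * s ω) + C ω) with hσp
  set σn : Ω → ℝ := fun ω => Real.exp (B ω - φ ω * s ω) /
      (Real.exp (B ω - φ ω * s ω) + C ω) with hσn
  set Z : Ω → ℝ := fun ω => φ ω * t ω * ξ ω *
      (Real.exp (B ω + φ ω * s ω * ξ ω) /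
        (Real.exp (B ω + φ ω * s ω * ξ ω) + C ω)) with hZ
  -- measurability
  have hσpm : Measurable σp := by
    apply Measurable.div
    · exact (hBm.add (hφm.mul hsm)).exp
    · exact ((hBm.add (hφm.mul hsm)).exp).add hCm
  have hσnm : Measurable σn := by
    apply Measurable.div
    · exact (hBm.sub (hφm.mul hsm)).exp
    · exact ((hBm.sub (hφm.mul hsm)).exp).add hCm
  have hZm : Measurable Z := by
    apply ((hφm.mul htm).mul hξm).mul
    apply Measurable.div
    · exact (hBm.add ((hφm.mul hsm).mul hξm)).exp
    · exact ((hBm.add ((hφm.mul hsm).mul hξm)).exp).add hCm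
  -- integrability of φ t σ± terms
  have hgp : Integrable (fun ω => φ ω * t ω * σp ω) μ := by
    refine hint.mono ((hφm.mul htm).mul hσpm).aestronglyMeasurable ?_
    filter_upwards [ht0, hC0] with ω ht hC
    obtain ⟨h0, h1⟩ := sigma_bounds_aux (x := B ω + φ ω * s ω) hC
    simp only [Real.norm_eq_abs]
    rw [abs_of_nonneg (show (0:ℝ) ≤ |φ ω| * t ω by positivity), abs_mul, abs_mul,
      abs_of_nonneg ht, abs_of_nonneg h0]
    nlinarith [mul_nonneg (abs_nonneg (φ ω)) ht]
  have hgn : Integrable (fun ω => φ ω * t ω * σn ω) μ := by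
    refine hint.mono ((hφm.mul htm).mul hσnm).aestronglyMeasurable ?_
    filter_upwards [ht0, hC0] with ω ht hC
    obtain ⟨h0, h1⟩ := sigma_bounds_aux (x := B ω - φ ω * s ω) hC
    simp only [Real.norm_eq_abs]
    rw [abs_of_nonneg (show (0:ℝ) ≤ |φ ω| * t ω by positivity), abs_mul, abs_mul,
      abs_of_nonneg ht, abs_of_nonneg h0]
    nlinarith [mul_nonneg (abs_nonneg (φ ω)) ht]
  -- integrability of Z
  have hZint : Integrable Z μ := by
    refine hint.mono hZm.aestronglyMeasurable ?_
    filter_upwards [ht0, hC0, hξae] with ω ht hC hξv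
    have hξabs : |ξ ω| = 1 := by rcases hξv with h | h <;> simp [h]
    obtain ⟨h0, h1⟩ := sigma_bounds_aux (x := B ω + φ ω * s ω * ξ ω) hC
    simp only [hZ, Real.norm_eq_abs]
    rw [abs_of_nonneg (show (0:ℝ) ≤ |φ ω| * t ω by positivity), abs_mul, abs_mul, abs_mul,
      hξabs, abs_of_nonneg ht, abs_of_nonneg h0, mul_one]
    nlinarith [mul_nonneg (abs_nonneg (φ ω)) ht]
  refine ⟨hZint, ?_⟩
  -- indicators of ξ = ±1
  set f1 : ℝ → ℝ := Set.indicator {1} 1 with hf1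
  set fn : ℝ → ℝ := Set.indicator {-1} 1 with hfn
  have hf1m : Measurable f1 := measurable_one.indicator (measurableSet_singleton _)
  have hfnm : Measurable fn := measurable_one.indicator (measurableSet_singleton _)
  set V : Ω → ℝ × ℝ × ℝ × ℝ × ℝ := fun ω => (B ω, φ ω, s ω, t ω, C ω) with hV
  set gp : ℝ × ℝ × ℝ × ℝ × ℝ → ℝ := fun x =>
    x.2.1 * x.2.2.2.1 * (Real.exp (x.1 + x.2.1 * x.2.2.1) /
      (Real.exp (x.1 + x.2.1 * x.2.2.1) + x.2.2.2.2)) with hgpdef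
  set gn : ℝ × ℝ × ℝ × ℝ × ℝ → ℝ := fun x =>
    x.2.1 * x.2.2.2.1 * (Real.exp (x.1 - x.2.1 * x.2.2.1) /
      (Real.exp (x.1 - x.2.1 * x.2.2.1) + x.2.2.2.2)) with hgndef
  have hgpm : Measurable gp := by
    apply Measurable.mul
    · exact (measurable_fst.comp measurable_snd).mul
        (measurable_fst.comp (measurable_snd.comp (measurable_snd.comp measurable_snd)))
    · apply Measurable.div
      · exact (measurable_fst.add ((measurable_fst.comp measurable_snd).mul
          (measurable_fst.comp (measurable_snd.comp measurable_snd)))).exp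
      · exact ((measurable_fst.add ((measurable_fst.comp measurable_snd).mul
          (measurable_fst.comp (measurable_snd.comp measurable_snd)))).exp).add
          (measurable_snd.comp (measurable_snd.comp (measurable_snd.comp measurable_snd)))
  have hgnm : Measurable gn := by
    apply Measurable.mul
    · exact (measurable_fst.comp measurable_snd).mul
        (measurable_fst.comp (measurable_snd.comp (measurable_snd.comp measurable_snd)))
    · apply Measurable.div
      · exact (measurable_fst.sub ((measurable_fst.comp measurable_snd).mul
          (measurable_fst.comp (measurable_snd.comp measurable_snd)))).exp
      · exact ((measurable_fst.sub ((measurable_fst.comp measurable_snd).mul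
          (measurable_fst.comp (measurable_snd.comp measurable_snd)))).exp).add
          (measurable_snd.comp (measurable_snd.comp (measurable_snd.comp measurable_snd)))
  have hgpV : (fun ω => gp (V ω)) = fun ω => φ ω * t ω * σp ω := rfl
  have hgnV : (fun ω => gn (V ω)) = fun ω => φ ω * t ω * σn ω := rfl
  have hindp : ProbabilityTheory.IndepFun (f1 ∘ ξ) (gp ∘ V) μ :=
    hindep.comp hf1m hgpm
  have hindn : ProbabilityTheory.IndepFun (fn ∘ ξ) (gn ∘ V) μ :=
    hindep.comp hfnm hgnm
  -- integrals of indicators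
  have hif1 : (fun ω => f1 (ξ ω)) = (ξ ⁻¹' {1}).indicator (fun _ => (1:ℝ)) := by
    ext ω
    by_cases h : ξ ω = 1 <;>
      simp [hf1, Set.indicator_apply, Set.mem_preimage, h]
  have hifn : (fun ω => fn (ξ ω)) = (ξ ⁻¹' {-1}).indicator (fun _ => (1:ℝ)) := by
    ext ω
    by_cases h : ξ ω = -1 <;>
      simp [hfn, Set.indicator_apply, Set.mem_preimage, h]
  have hsum1 : ∫ ω, f1 (ξ ω) ∂μ = 1 / 2 := by
    rw [hif1, integral_indicator_const _ (hξm (measurableSet_singleton _)), measureReal_def, hξ1]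
    simp [ENNReal.toReal_div]
  have hsumn : ∫ ω, fn (ξ ω) ∂μ = 1 / 2 := by
    rw [hifn, integral_indicator_const _ (hξm (measurableSet_singleton _)), measureReal_def, hξneg1]
    simp [ENNReal.toReal_div]
  -- Z =ᵐ f1∘ξ * gp∘V - fn∘ξ * gn∘V
  have hZeq : Z =ᵐ[μ] fun ω => f1 (ξ ω) * gp (V ω) - fn (ξ ω) * gn (V ω) := by
    filter_upwards [hξae] with ω hξv
    rcases hξv with h | h
    · have e1 : f1 (ξ ω) = 1 := by simp [hf1, Set.indicator_apply, h]
      have e2 : fn (ξ ω) = 0 := by norm_num [hfn, Set.indicator_apply, h]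
      rw [e1, e2]
      simp only [hZ, hgpdef, hgndef, hV, h, mul_one, one_mul, zero_mul, sub_zero]
    · have e1 : f1 (ξ ω) = 0 := by norm_num [hf1, Set.indicator_apply, h]
      have e2 : fn (ξ ω) = 1 := by simp [hfn, Set.indicator_apply, h]
      rw [e1, e2]
      simp only [hZ, hgpdef, hgndef, hV, h, mul_neg_one, ← sub_eq_add_neg, zero_mul,
        one_mul, zero_sub]
      ring
  -- integrability of products
  have hip : Integrable (fun ω => f1 (ξ ω) * gp (V ω)) μ := by
    apply Integrable.bdd_mul (c := 1) hgp (hf1m.comp hξm).aestronglyMeasurable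
    refine Filter.Eventually.of_forall (fun ω => ?_)
    simp only [Function.comp_apply, hf1, Set.indicator_apply, Real.norm_eq_abs]
    split <;> norm_num
  have hin : Integrable (fun ω => fn (ξ ω) * gn (V ω)) μ := by
    apply Integrable.bdd_mul (c := 1) hgn (hfnm.comp hξm).aestronglyMeasurable
    refine Filter.Eventually.of_forall (fun ω => ?_)
    simp only [Function.comp_apply, hfn, Set.indicator_apply, Real.norm_eq_abs]
    split <;> norm_num
  -- compute the expectation
  have hcalc : ∫ ω, Z ω ∂μ =
      (1 / 2) * (∫ ω, gp (V ω) ∂μ) - (1 / 2) * (∫ ω, gn (V ω) ∂μ) := by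
    rw [integral_congr_ae hZeq, integral_sub hip hin]
    have e1 : ∫ ω, f1 (ξ ω) * gp (V ω) ∂μ =
        (∫ ω, f1 (ξ ω) ∂μ) * ∫ ω, gp (V ω) ∂μ := by
      have := hindp.integral_mul_eq_mul_integral (hf1m.comp hξm).aestronglyMeasurable
        (hgpm.comp (hBm.prodMk (hφm.prodMk (hsm.prodMk
          (htm.prodMk hCm))))).aestronglyMeasurable
      simpa [Pi.mul_apply, Function.comp] using this
    have e2 : ∫ ω, fn (ξ ω) * gn (V ω) ∂μ =
        (∫ ω, fn (ξ ω) ∂μ) * ∫ ω, gn (V ω) ∂μ := by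
      have := hindn.integral_mul_eq_mul_integral (hfnm.comp hξm).aestronglyMeasurable
        (hgnm.comp (hBm.prodMk (hφm.prodMk (hsm.prodMk
          (htm.prodMk hCm))))).aestronglyMeasurable
      simpa [Pi.mul_apply, Function.comp] using this
    rw [e1, e2, hsum1, hsumn]
  -- the difference of the two integrals is nonneg
  have hdiff : ∫ ω, gn (V ω) ∂μ ≤ ∫ ω, gp (V ω) ∂μ := by
    rw [hgpV, hgnV]
    apply integral_mono_ae hgn hgp
    filter_upwards [hs0, ht0, hC0] with ω hs ht hC
    rcases le_total 0 (φ ω) with hφ | hφ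
    · have : B ω - φ ω * s ω ≤ B ω + φ ω * s ω := by nlinarith
      have hm := sigma_mono_aux hC this
      have := mul_nonneg (mul_nonneg hφ ht) (sub_nonneg.2 hm)
      simp only [hσp, hσn]
      nlinarith
    · have : B ω + φ ω * s ω ≤ B ω - φ ω * s ω := by nlinarith
      have hm := sigma_mono_aux hC this
      have := mul_nonneg (mul_nonneg (neg_nonneg.2 hφ) ht) (sub_nonneg.2 hm)
      simp only [hσp, hσn]
      nlinarith
  have : (0:ℝ) ≤ ∫ ω, Z ω ∂μ := by rw [hcalc]; linarith
  exact this
end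

section
/- Fix positive integers m, n ≥ 2, k, an index v ∈ {1,…,n}, an index i ∈ {1,…,k}, and coefficients α_1,…,α_k ≥ 0. On a probability space let φ = (φ_1,…,φ_m) be a real random vector with E[|φ_u|] < ∞ for each u, let M^1,…,M^k be random m×n matrices with entries in {0,1}, and let (ξ_{u w})_{u ≤ m, w ≤ n} be i.i.d. random variables uniform on {−1, +1} such that the family (ξ_{u w}) is independent of (φ, M^1,…,M^k). Define W_{u w} = ξ_{u w}·√(2/m), logits y_w = ∑_{u=1}^m φ_u W_{u w} (∑_{ω=1}^k α_ω M^ω_{u w}), and p_v = exp(y_v)/∑_{w=1}^n exp(y_w). Then for every u, E[p_v φ_u ξ_{u v} M^i_{u v}] ≥ 0; consequently E[∑_{v=1}^n ∑_{u=1}^m p_v φ_u ξ_{u v} M^i_{u v}] ≥ 0, i.e. the expected negative partial derivative of G(y) = log(∑_{w=1}^n exp(y_w)) with respect to the mask coefficient α_i satisfies E[−∂G/∂α_i] ≤ 0. (Lemma 2 of the paper, under the independence hypotheses made precise.) -/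
open MeasureTheory


/-- law of a ±1 sign variable -/
lemma supsup_aux_law {Ω : Type*} [MeasurableSpace Ω] (μ : Measure Ω) [IsProbabilityMeasure μ]
    (g : Ω → ℝ) (hg : Measurable g) (h1 : μ (g ⁻¹' {1}) = 1 / 2)
    (h2 : μ (g ⁻¹' {-1}) = 1 / 2) :
    μ.map g = (2 : ENNReal)⁻¹ • (Measure.dirac (1 : ℝ) + Measure.dirac (-1 : ℝ)) := by
  have hd : Disjoint (g ⁻¹' {1}) (g ⁻¹' {-1}) := by
    refine Set.disjoint_left.2 fun ω hω hω' => ?_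
    simp only [Set.mem_preimage, Set.mem_singleton_iff] at hω hω'
    norm_num [hω] at hω'
  have hm1 : MeasurableSet (g ⁻¹' {1}) := hg (measurableSet_singleton _)
  have hm2 : MeasurableSet (g ⁻¹' {-1}) := hg (measurableSet_singleton _)
  have hunion : μ (g ⁻¹' {1} ∪ g ⁻¹' {-1}) = 1 := by
    rw [measure_union hd hm2, h1, h2]
    rw [ENNReal.div_add_div_same, show (1 : ENNReal) + 1 = 2 by norm_num,
      ENNReal.div_self] <;> norm_num
  have hcompl : μ ((g ⁻¹' {1} ∪ g ⁻¹' {-1})ᶜ) = 0 := by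
    rw [measure_compl (hm1.union hm2) (measure_ne_top _ _), hunion, measure_univ, tsub_self]
  ext s hs
  rw [Measure.map_apply hg hs]
  have hsplit : μ (g ⁻¹' s) =
      μ (g ⁻¹' s ∩ (g ⁻¹' {1} ∪ g ⁻¹' {-1})) := by
    refine (measure_inter_conull hcompl).symm
  rw [hsplit]
  have hrhs : ((2 : ENNReal)⁻¹ • (Measure.dirac (1 : ℝ) + Measure.dirac (-1 : ℝ))) s
      = 2⁻¹ * (s.indicator 1 1 + s.indicator 1 (-1)) := by
    simp [Measure.dirac_apply' _ hs, mul_add]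
  rw [hrhs]
  by_cases hs1 : (1 : ℝ) ∈ s <;> by_cases hs2 : (-1 : ℝ) ∈ s
  · have : g ⁻¹' s ∩ (g ⁻¹' {1} ∪ g ⁻¹' {-1}) = g ⁻¹' {1} ∪ g ⁻¹' {-1} := by
      refine Set.inter_eq_right.2 ?_
      rintro ω (hω | hω) <;>
        simp only [Set.mem_preimage, Set.mem_singleton_iff] at hω <;>
        simp [Set.mem_preimage, hω, hs1, hs2]
    rw [this, hunion]
    simp only [Set.indicator_of_mem hs1, Set.indicator_of_mem hs2, Pi.one_apply]
    rw [show (1 : ENNReal) + 1 = 2 by norm_num, ENNReal.inv_mul_cancel] <;> norm_num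
  · have : g ⁻¹' s ∩ (g ⁻¹' {1} ∪ g ⁻¹' {-1}) = g ⁻¹' {1} := by
      ext ω
      simp only [Set.mem_inter_iff, Set.mem_preimage, Set.mem_union, Set.mem_singleton_iff]
      constructor
      · rintro ⟨hωs, hω | hω⟩
        · exact hω
        · rw [hω] at hωs; exact absurd hωs hs2
      · intro hω; rw [hω]; exact ⟨hs1, Or.inl rfl⟩
    rw [this, h1]
    simp only [Set.indicator_of_mem hs1, Set.indicator_of_notMem hs2, Pi.one_apply, add_zero,
      mul_one]
    rw [ENNReal.div_eq_inv_mul, mul_one]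
  · have : g ⁻¹' s ∩ (g ⁻¹' {1} ∪ g ⁻¹' {-1}) = g ⁻¹' {-1} := by
      ext ω
      simp only [Set.mem_inter_iff, Set.mem_preimage, Set.mem_union, Set.mem_singleton_iff]
      constructor
      · rintro ⟨hωs, hω | hω⟩
        · rw [hω] at hωs; exact absurd hωs hs1
        · exact hω
      · intro hω; rw [hω]; exact ⟨hs2, Or.inr rfl⟩
    rw [this, h2]
    simp only [Set.indicator_of_mem hs2, Set.indicator_of_notMem hs1, Pi.one_apply, zero_add,
      mul_one]
    rw [ENNReal.div_eq_inv_mul, mul_one]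
  · have : g ⁻¹' s ∩ (g ⁻¹' {1} ∪ g ⁻¹' {-1}) = ∅ := by
      ext ω
      simp only [Set.mem_inter_iff, Set.mem_preimage, Set.mem_union, Set.mem_singleton_iff,
        Set.mem_empty_iff_false, iff_false, not_and, not_or]
      intro hωs
      constructor <;> intro hω <;> rw [hω] at hωs
      · exact hs1 hωs
      · exact hs2 hωs
    rw [this]
    simp only [Set.indicator_of_notMem hs1, Set.indicator_of_notMem hs2, measure_empty,
      add_zero, mul_zero]

/-- negation preserves the symmetric two-point law -/
lemma supsup_aux_negpres :
    MeasurePreserving (fun r : ℝ => -r)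
      ((2 : ENNReal)⁻¹ • (Measure.dirac (1 : ℝ) + Measure.dirac (-1 : ℝ)))
      ((2 : ENNReal)⁻¹ • (Measure.dirac (1 : ℝ) + Measure.dirac (-1 : ℝ))) := by
  refine ⟨measurable_neg, ?_⟩
  rw [Measure.map_smul, Measure.map_add _ _ measurable_neg,
    Measure.map_dirac' measurable_neg, Measure.map_dirac' measurable_neg]
  norm_num [add_comm]

/-- joint law of iid family equals product of laws -/
lemma supsup_aux_pi {Ω ι : Type*} [MeasurableSpace Ω] [Fintype ι] (μ : Measure Ω)
    [IsProbabilityMeasure μ] (g : ι → Ω → ℝ) (hg : ∀ q, Measurable (g q))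
    (hind : ProbabilityTheory.iIndepFun g μ) :
    μ.map (fun ω q => g q ω) = Measure.pi (fun q => μ.map (g q)) := by
  haveI : ∀ q, IsProbabilityMeasure (μ.map (g q)) :=
    fun q => Measure.isProbabilityMeasure_map (hg q).aemeasurable
  refine (Measure.pi_eq fun s hs => ?_).symm
  rw [Measure.map_apply (measurable_pi_lambda _ fun q => hg q) (MeasurableSet.univ_pi hs)]
  have hpre : (fun ω q => g q ω) ⁻¹' Set.pi Set.univ s = ⋂ q ∈ Finset.univ, g q ⁻¹' s q := by
    ext ω; simp [Set.mem_pi]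
  rw [hpre, hind.measure_inter_preimage_eq_mul Finset.univ (fun q _ => hs q)]
  exact Finset.prod_congr rfl fun q _ => (Measure.map_apply (hg q) (hs q)).symm

section SupSupCore

variable (m n k : ℕ) (α : Fin k → ℝ)

/-- logits as a function on the law space -/
noncomputable def supsupY
    (s : (Fin m × Fin n → ℝ) × ((Fin m → ℝ) × (Fin k → Fin m → Fin n → ℝ)))
    (w : Fin n) : ℝ :=
  ∑ u : Fin m, s.2.1 u * (s.1 (u, w) * Real.sqrt (2 / (m : ℝ))) *
    ∑ j : Fin k, α j * s.2.2 j u w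

/-- softmax probabilities on the law space -/
noncomputable def supsupP
    (s : (Fin m × Fin n → ℝ) × ((Fin m → ℝ) × (Fin k → Fin m → Fin n → ℝ)))
    (w : Fin n) : ℝ :=
  Real.exp (supsupY m n k α s w) / ∑ w' : Fin n, Real.exp (supsupY m n k α s w')

/-- integrand on the law space -/
noncomputable def supsupF (i : Fin k) (u : Fin m) (w : Fin n)
    (s : (Fin m × Fin n → ℝ) × ((Fin m → ℝ) × (Fin k → Fin m → Fin n → ℝ))) : ℝ :=
  supsupP m n k α s w * s.2.1 u * s.1 (u, w) * s.2.2 i u w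

/-- sign flip at a single coordinate -/
def supsupT (u : Fin m) (w : Fin n)
    (s : (Fin m × Fin n → ℝ) × ((Fin m → ℝ) × (Fin k → Fin m → Fin n → ℝ))) :
    (Fin m × Fin n → ℝ) × ((Fin m → ℝ) × (Fin k → Fin m → Fin n → ℝ)) :=
  (fun q => if q = (u, w) then -s.1 q else s.1 q, s.2)

lemma supsupY_meas (w : Fin n) : Measurable (fun s => supsupY m n k α s w) := by
  refine Finset.measurable_sum _ fun u _ => ?_
  exact (((measurable_pi_apply u).comp (measurable_fst.comp measurable_snd)).mul
      (((measurable_pi_apply (u, w)).comp measurable_fst).mul_const _)).mul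
    (Finset.measurable_sum _ fun j _ => measurable_const.mul
      ((measurable_pi_apply w).comp ((measurable_pi_apply u).comp
        ((measurable_pi_apply j).comp (measurable_snd.comp measurable_snd)))))

lemma supsupP_meas (w : Fin n) : Measurable (fun s => supsupP m n k α s w) :=
  (Real.measurable_exp.comp (supsupY_meas m n k α w)).div
    (Finset.measurable_sum _ fun w' _ => Real.measurable_exp.comp (supsupY_meas m n k α w'))

lemma supsupF_meas (i : Fin k) (u : Fin m) (w : Fin n) :
    Measurable (supsupF m n k α i u w) :=
  (((supsupP_meas m n k α w).mul
      ((measurable_pi_apply u).comp (measurable_fst.comp measurable_snd))).mul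
    ((measurable_pi_apply (u, w)).comp measurable_fst)).mul
    ((measurable_pi_apply w).comp ((measurable_pi_apply u).comp
      ((measurable_pi_apply i).comp (measurable_snd.comp measurable_snd))))

lemma supsupT_meas (u : Fin m) (w : Fin n) : Measurable (supsupT m n k u w) := by
  refine Measurable.prodMk (measurable_pi_lambda _ fun q => ?_) measurable_snd
  by_cases hq : q = (u, w)
  · simp only [hq, if_pos rfl]
    exact ((measurable_pi_apply _).comp measurable_fst).neg
  · simp only [if_neg hq]
    exact (measurable_pi_apply _).comp measurable_fst

/-- monotonicity of softmax numerator share -/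
lemma supsup_aux_mono {C : ℝ} (hC : 0 ≤ C) {t t' : ℝ} (h : t ≤ t') :
    Real.exp t / (Real.exp t + C) ≤ Real.exp t' / (Real.exp t' + C) := by
  have h1 : 0 < Real.exp t + C := by positivity
  have h2 : 0 < Real.exp t' + C := by positivity
  rw [div_le_div_iff₀ h1 h2]
  have h3 := mul_le_mul_of_nonneg_left (Real.exp_le_exp.2 h) hC
  nlinarith [Real.exp_pos t, Real.exp_pos t']

/-- the pointwise flip inequality -/
lemma supsup_pointwise (hα : ∀ j, 0 ≤ α j) (i : Fin k) (u : Fin m) (w : Fin n)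
    (s : (Fin m × Fin n → ℝ) × ((Fin m → ℝ) × (Fin k → Fin m → Fin n → ℝ)))
    (hb : ∀ j, 0 ≤ s.2.2 j u w) :
    0 ≤ supsupF m n k α i u w s + supsupF m n k α i u w (supsupT m n k u w s) := by
  classical
  set x := s.1 with hx
  set a := s.2.1 with ha
  set b := s.2.2 with hbdef
  set e : ℝ := Real.sqrt (2 / (m : ℝ)) * ∑ j : Fin k, α j * b j u w with he
  have hSj : 0 ≤ ∑ j : Fin k, α j * b j u w :=
    Finset.sum_nonneg fun j _ => mul_nonneg (hα j) (hb j)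
  have he0 : 0 ≤ e := mul_nonneg (Real.sqrt_nonneg _) hSj
  set r : ℝ := a u * x (u, w) with hr
  set t : ℝ := r * e with ht
  set R : ℝ := ∑ u' ∈ Finset.univ.erase u,
      a u' * (x (u', w) * Real.sqrt (2 / (m : ℝ))) * ∑ j : Fin k, α j * b j u' w with hR
  -- the flipped point
  set s' := supsupT m n k u w s with hs'
  have hs'1 : ∀ q, s'.1 q = if q = (u, w) then -x q else x q := fun q => rfl
  have hs'2 : s'.2 = s.2 := rfl
  -- split the logit at v-coordinate
  have hYs : supsupY m n k α s w = t + R := by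
    rw [supsupY, ← Finset.add_sum_erase _ _ (Finset.mem_univ u)]
    simp only [← hx, ← ha, ← hbdef, ← hR]
    rw [ht, hr, he]
    ring
  have hYs' : supsupY m n k α s' w = -t + R := by
    rw [supsupY, ← Finset.add_sum_erase _ _ (Finset.mem_univ u)]
    have h1 : s'.1 (u, w) = -x (u, w) := by rw [hs'1]; simp
    have h2 : ∀ u' ∈ Finset.univ.erase u, s'.2.1 u' *
        (s'.1 (u', w) * Real.sqrt (2 / (m : ℝ))) * ∑ j : Fin k, α j * s'.2.2 j u' w =
        a u' * (x (u', w) * Real.sqrt (2 / (m : ℝ))) * ∑ j : Fin k, α j * b j u' w := by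
      intro u' hu'
      have hne : (u', w) ≠ (u, w) := by
        simp only [ne_eq, Prod.mk.injEq, not_and]
        intro h; exact absurd h (Finset.ne_of_mem_erase hu')
      rw [hs'1, if_neg hne, hs'2]
    rw [Finset.sum_congr rfl h2, h1, hs'2]
    simp only [← hx, ← ha, ← hbdef, ← hR]
    rw [ht, hr, he]
    ring
  -- off-coordinate logits unchanged
  have hYoff : ∀ w', w' ≠ w → supsupY m n k α s' w' = supsupY m n k α s w' := by
    intro w' hw'
    refine Finset.sum_congr rfl fun u' _ => ?_
    have hne : (u', w') ≠ (u, w) := by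
      simp only [ne_eq, Prod.mk.injEq, not_and]
      intro _; exact hw'
    rw [hs'1, if_neg hne, hs'2]
  -- denominators
  set C : ℝ := ∑ w' ∈ Finset.univ.erase w, Real.exp (supsupY m n k α s w') with hC
  have hC0 : 0 ≤ C := Finset.sum_nonneg fun _ _ => (Real.exp_pos _).le
  have hDs : ∑ w' : Fin n, Real.exp (supsupY m n k α s w') = Real.exp (t + R) + C := by
    rw [← Finset.add_sum_erase _ _ (Finset.mem_univ w), hYs]
  have hDs' : ∑ w' : Fin n, Real.exp (supsupY m n k α s' w') = Real.exp (-t + R) + C := by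
    rw [← Finset.add_sum_erase _ _ (Finset.mem_univ w), hYs']
    congr 1
    exact Finset.sum_congr rfl fun w' hw' =>
      congrArg Real.exp (hYoff w' (Finset.ne_of_mem_erase hw'))
  have hP1 : supsupP m n k α s w = Real.exp (t + R) / (Real.exp (t + R) + C) := by
    rw [supsupP, hYs, hDs]
  have hP2 : supsupP m n k α s' w = Real.exp (-t + R) / (Real.exp (-t + R) + C) := by
    rw [supsupP, hYs', hDs']
  set P1 : ℝ := Real.exp (t + R) / (Real.exp (t + R) + C) with hP1d
  set P2 : ℝ := Real.exp (-t + R) / (Real.exp (-t + R) + C) with hP2d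
  -- rewrite the goal
  have hgoal : supsupF m n k α i u w s + supsupF m n k α i u w s' =
      (r * (P1 - P2)) * b i u w := by
    have h1 : s'.1 (u, w) = -x (u, w) := by rw [hs'1]; simp
    rw [supsupF, supsupF, hP1, hP2, hs'2, h1]
    simp only [← hx, ← ha, ← hbdef, ← hr]
    ring
  rw [hgoal]
  have hbi : 0 ≤ b i u w := hb i
  rcases le_or_gt 0 r with hr0 | hr0
  · have ht0 : 0 ≤ t := mul_nonneg hr0 he0
    have hmono : P2 ≤ P1 := supsup_aux_mono hC0 (by linarith : -t + R ≤ t + R)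
    exact mul_nonneg (mul_nonneg hr0 (by linarith)) hbi
  · have ht0 : t ≤ 0 := mul_nonpos_of_nonpos_of_nonneg hr0.le he0
    have hmono : P1 ≤ P2 := supsup_aux_mono hC0 (by linarith : t + R ≤ -t + R)
    have h2 : 0 ≤ (-r) * (P2 - P1) := mul_nonneg (by linarith) (by linarith)
    have h3 : 0 ≤ r * (P1 - P2) := by nlinarith
    exact mul_nonneg h3 hbi

end SupSupCore


/-- **Lemma 2.** In the SupSup single-layer model with fixed
random signed-constant weights `W u w = ξ u w · √(2/m)` (with `ξ` i.i.d.
uniform on `{-1, +1}` and independent of the data features `φ` and the binary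
masks `M¹, …, Mᵏ`), nonnegative mixing coefficients `α`, superimposed logits
`y ω w = ∑ u, φ ω u · (ξ u w ω · √(2/m)) · ∑ j, α j · M j ω u w` and softmax
probabilities `p ω w = exp (y ω w) / ∑ w', exp (y ω w')`, for every `u` we
have `E[p_v · φ_u · ξ_{u v} · M^i_{u v}] ≥ 0`; consequently
`E[∑ v ∑ u, p_v · φ_u · ξ_{u v} · M^i_{u v}] ≥ 0`, i.e. the expected negative
partial derivative of `G(y) = log ∑ exp` w.r.t. `α i` is `≤ 0`. -/
theorem supsup_expected_grad_other_task_nonneg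
    {Ω : Type*} [MeasurableSpace Ω] (μ : Measure Ω) [IsProbabilityMeasure μ]
    (m n k : ℕ) (hm : 0 < m) (hn : 2 ≤ n) (hk : 0 < k)
    (v : Fin n) (i : Fin k) (α : Fin k → ℝ) (hα : ∀ j, 0 ≤ α j)
    (φ : Ω → Fin m → ℝ) (M : Fin k → Ω → Fin m → Fin n → ℝ)
    (ξ : Fin m → Fin n → Ω → ℝ)
    (hφmeas : Measurable φ) (hMmeas : ∀ j, Measurable (M j))
    (hξmeas : ∀ u w, Measurable (ξ u w))
    (hφint : ∀ u, Integrable (fun ω => |φ ω u|) μ)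
    (hM01 : ∀ j ω u w, M j ω u w = 0 ∨ M j ω u w = 1)
    (hξ1 : ∀ u w, μ ((ξ u w) ⁻¹' {1}) = 1 / 2)
    (hξneg1 : ∀ u w, μ ((ξ u w) ⁻¹' {-1}) = 1 / 2)
    (hξiid : ProbabilityTheory.iIndepFun
      (fun p : Fin m × Fin n => ξ p.1 p.2) μ)
    (hindep : ProbabilityTheory.IndepFun
      (fun ω => fun p : Fin m × Fin n => ξ p.1 p.2 ω)
      (fun ω => (φ ω, fun j => M j ω)) μ)
    (y : Ω → Fin n → ℝ)
    (hy : ∀ ω w, y ω w =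
      ∑ u : Fin m, φ ω u * (ξ u w ω * Real.sqrt (2 / (m : ℝ))) *
        ∑ j : Fin k, α j * M j ω u w)
    (p : Ω → Fin n → ℝ)
    (hp : ∀ ω w, p ω w = Real.exp (y ω w) / ∑ w' : Fin n, Real.exp (y ω w')) :
    (∀ u : Fin m, 0 ≤ ∫ ω, p ω v * φ ω u * ξ u v ω * M i ω u v ∂μ) ∧
      0 ≤ ∫ ω, ∑ w : Fin n, ∑ u : Fin m,
          p ω w * φ ω u * ξ u w ω * M i ω u w ∂μ := by
  
  classical
  -- joint variables
  have hXm : Measurable (fun ω => fun q : Fin m × Fin n => ξ q.1 q.2 ω) :=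
    measurable_pi_lambda _ fun q => hξmeas q.1 q.2
  have hZm : Measurable (fun ω => (φ ω, fun j => M j ω) :
      Ω → (Fin m → ℝ) × (Fin k → Fin m → Fin n → ℝ)) :=
    hφmeas.prodMk (measurable_pi_lambda _ fun j => hMmeas j)
  -- measurability of y and p
  have hym : ∀ w, Measurable fun ω => y ω w := by
    intro w
    have hrw : (fun ω => y ω w) = fun ω =>
        ∑ u : Fin m, φ ω u * (ξ u w ω * Real.sqrt (2 / (m : ℝ))) *
          ∑ j : Fin k, α j * M j ω u w := funext fun ω => hy ω w
    rw [hrw]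
    refine Finset.measurable_sum _ fun u _ => ?_
    exact (((measurable_pi_apply u).comp hφmeas).mul ((hξmeas u w).mul_const _)).mul
      (Finset.measurable_sum _ fun j _ => measurable_const.mul
        ((measurable_pi_apply w).comp ((measurable_pi_apply u).comp (hMmeas j))))
  have hpm : ∀ w, Measurable fun ω => p ω w := by
    intro w
    have hrw : (fun ω => p ω w) = fun ω =>
        Real.exp (y ω w) / ∑ w' : Fin n, Real.exp (y ω w') := funext fun ω => hp ω w
    rw [hrw]
    exact (Real.measurable_exp.comp (hym w)).div
      (Finset.measurable_sum _ fun w' _ => Real.measurable_exp.comp (hym w'))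
  -- bounds on p
  have hDpos : ∀ ω, 0 < ∑ w' : Fin n, Real.exp (y ω w') := fun ω =>
    Finset.sum_pos (fun w' _ => Real.exp_pos _) ⟨v, Finset.mem_univ v⟩
  have hppos : ∀ ω w, 0 ≤ p ω w := by
    intro ω w
    rw [hp ω w]
    exact div_nonneg (Real.exp_pos _).le (hDpos ω).le
  have hple : ∀ ω w, p ω w ≤ 1 := by
    intro ω w
    rw [hp ω w]
    refine div_le_one_of_le₀ ?_ (hDpos ω).le
    exact Finset.single_le_sum (f := fun w' => Real.exp (y ω w'))
      (fun w' _ => (Real.exp_pos _).le) (Finset.mem_univ w)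
  -- a.e. sign values
  have hξae : ∀ u w, ∀ᵐ ω ∂μ, ξ u w ω = 1 ∨ ξ u w ω = -1 := by
    intro u w
    have hd : Disjoint ((ξ u w) ⁻¹' {1}) ((ξ u w) ⁻¹' {-1}) := by
      refine Set.disjoint_left.2 fun ω hω hω' => ?_
      simp only [Set.mem_preimage, Set.mem_singleton_iff] at hω hω'
      norm_num [hω] at hω'
    have hm2 : MeasurableSet ((ξ u w) ⁻¹' {-1}) := hξmeas u w (measurableSet_singleton _)
    have hm1 : MeasurableSet ((ξ u w) ⁻¹' {1}) := hξmeas u w (measurableSet_singleton _)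
    have hunion : μ ((ξ u w) ⁻¹' {1} ∪ (ξ u w) ⁻¹' {-1}) = 1 := by
      rw [measure_union hd hm2, hξ1 u w, hξneg1 u w, ENNReal.div_add_div_same,
        show (1 : ENNReal) + 1 = 2 by norm_num, ENNReal.div_self] <;> norm_num
    have hcompl : μ (((ξ u w) ⁻¹' {1} ∪ (ξ u w) ⁻¹' {-1})ᶜ) = 0 := by
      rw [measure_compl (hm1.union hm2) (measure_ne_top _ _), hunion, measure_univ, tsub_self]
    have hset : {ω | ¬(ξ u w ω = 1 ∨ ξ u w ω = -1)} =
        ((ξ u w) ⁻¹' {1} ∪ (ξ u w) ⁻¹' {-1})ᶜ := by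
      ext ω; simp [not_or]
    rw [MeasureTheory.ae_iff, hset]
    exact hcompl
  -- integrability of each term
  have hint : ∀ (w : Fin n) (u : Fin m),
      Integrable (fun ω => p ω w * φ ω u * ξ u w ω * M i ω u w) μ := by
    intro w u
    have hmeas : Measurable fun ω => p ω w * φ ω u * ξ u w ω * M i ω u w :=
      (((hpm w).mul ((measurable_pi_apply u).comp hφmeas)).mul (hξmeas u w)).mul
        ((measurable_pi_apply w).comp ((measurable_pi_apply u).comp (hMmeas i)))
    refine (hφint u).mono hmeas.aestronglyMeasurable ?_
    filter_upwards [hξae u w] with ω hξω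
    rw [Real.norm_eq_abs, Real.norm_eq_abs, abs_abs]
    have hpabs : |p ω w| ≤ 1 := abs_le.2 ⟨by linarith [hppos ω w], hple ω w⟩
    have hMabs : |M i ω u w| ≤ 1 := by rcases hM01 i ω u w with h | h <;> simp [h]
    have hξabs : |ξ u w ω| = 1 := by rcases hξω with h | h <;> simp [h]
    calc |p ω w * φ ω u * ξ u w ω * M i ω u w|
        = |p ω w| * |φ ω u| * |ξ u w ω| * |M i ω u w| := by
          rw [abs_mul, abs_mul, abs_mul]
      _ = (|p ω w| * |M i ω u w|) * |φ ω u| := by rw [hξabs]; ring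
      _ ≤ (1 * 1) * |φ ω u| := by
          refine mul_le_mul_of_nonneg_right ?_ (abs_nonneg _)
          exact mul_le_mul hpabs hMabs (abs_nonneg _) zero_le_one
      _ = |φ ω u| := by ring
  -- the key single-term inequality
  have key : ∀ (w : Fin n) (u : Fin m),
      0 ≤ ∫ ω, p ω w * φ ω u * ξ u w ω * M i ω u w ∂μ := by
    intro w u
    have hfm := supsupF_meas m n k α i u w
    have hpair : Measurable (fun ω =>
        ((fun q : Fin m × Fin n => ξ q.1 q.2 ω), (φ ω, fun j => M j ω))) :=
      hXm.prodMk hZm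
    -- composition identity
    have hfc : ∀ ω, supsupF m n k α i u w
        ((fun q : Fin m × Fin n => ξ q.1 q.2 ω), (φ ω, fun j => M j ω)) =
        p ω w * φ ω u * ξ u w ω * M i ω u w := by
      intro ω
      have hYc : ∀ w', supsupY m n k α
          ((fun q : Fin m × Fin n => ξ q.1 q.2 ω), (φ ω, fun j => M j ω)) w' = y ω w' := by
        intro w'
        rw [hy ω w']
        rfl
      rw [supsupF, supsupP]
      simp only [hYc]
      rw [hp ω w]
    -- the pushforward measure
    haveI hprob : ∀ q : Fin m × Fin n, IsProbabilityMeasure (μ.map (ξ q.1 q.2)) :=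
      fun q => Measure.isProbabilityMeasure_map (hξmeas q.1 q.2).aemeasurable
    haveI : IsProbabilityMeasure (μ.map (fun ω => fun q : Fin m × Fin n => ξ q.1 q.2 ω)) :=
      Measure.isProbabilityMeasure_map hXm.aemeasurable
    haveI : IsProbabilityMeasure (μ.map (fun ω =>
        ((φ ω, fun j => M j ω) : (Fin m → ℝ) × (Fin k → Fin m → Fin n → ℝ)))) :=
      Measure.isProbabilityMeasure_map hZm.aemeasurable
    have hκ : μ.map (fun ω =>
        ((fun q : Fin m × Fin n => ξ q.1 q.2 ω), (φ ω, fun j => M j ω))) =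
        (μ.map (fun ω => fun q : Fin m × Fin n => ξ q.1 q.2 ω)).prod
          (μ.map (fun ω => (φ ω, fun j => M j ω))) :=
      (ProbabilityTheory.indepFun_iff_map_prod_eq_prod_map_map
        hXm.aemeasurable hZm.aemeasurable).mp hindep
    have hpi : μ.map (fun ω => fun q : Fin m × Fin n => ξ q.1 q.2 ω) =
        Measure.pi (fun q : Fin m × Fin n => μ.map (ξ q.1 q.2)) :=
      supsup_aux_pi μ _ (fun q => hξmeas q.1 q.2) hξiid
    -- the single-coordinate flip preserves the law of the signs
    have hT0 : MeasurePreserving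
        (fun x : Fin m × Fin n → ℝ => fun q => if q = (u, w) then -x q else x q)
        (μ.map (fun ω => fun q : Fin m × Fin n => ξ q.1 q.2 ω))
        (μ.map (fun ω => fun q : Fin m × Fin n => ξ q.1 q.2 ω)) := by
      rw [hpi]
      refine measurePreserving_pi
        (f := fun (q : Fin m × Fin n) (r : ℝ) => if q = (u, w) then -r else r)
        _ _ fun q => ?_
      by_cases hq : q = (u, w)
      · subst hq
        simp only [eq_self_iff_true, if_true]
        rw [supsup_aux_law μ (ξ u w) (hξmeas u w) (hξ1 u w) (hξneg1 u w)]
        exact supsup_aux_negpres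
      · simp only [if_neg hq]
        exact MeasurePreserving.id _
    have hTs : ∀ s : (Fin m × Fin n → ℝ) × ((Fin m → ℝ) × (Fin k → Fin m → Fin n → ℝ)),
        supsupT m n k u w s = Prod.map
          (fun x : Fin m × Fin n → ℝ => fun q => if q = (u, w) then -x q else x q)
          id s := fun s => rfl
    have hTκ : MeasurePreserving (supsupT m n k u w)
        (μ.map (fun ω =>
          ((fun q : Fin m × Fin n => ξ q.1 q.2 ω), (φ ω, fun j => M j ω))))
        (μ.map (fun ω =>
          ((fun q : Fin m × Fin n => ξ q.1 q.2 ω), (φ ω, fun j => M j ω)))) := by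
      rw [hκ]
      have := hT0.prod (MeasurePreserving.id
        (μ.map (fun ω => (φ ω, fun j => M j ω))))
      rw [show (Prod.map
          (fun x : Fin m × Fin n → ℝ => fun q => if q = (u, w) then -x q else x q)
          id) = supsupT m n k u w from funext fun s => (hTs s).symm] at this
      exact this
    -- transfer integral to the law space
    have hintμ : Integrable (fun ω => supsupF m n k α i u w
        ((fun q : Fin m × Fin n => ξ q.1 q.2 ω), (φ ω, fun j => M j ω))) μ := by
      simp only [hfc]
      exact hint w u
    have hintκ : Integrable (supsupF m n k α i u w)
        (μ.map (fun ω =>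
          ((fun q : Fin m × Fin n => ξ q.1 q.2 ω), (φ ω, fun j => M j ω)))) :=
      (integrable_map_measure hfm.aestronglyMeasurable hpair.aemeasurable).mpr hintμ
    have hintκT : Integrable (fun s => supsupF m n k α i u w (supsupT m n k u w s))
        (μ.map (fun ω =>
          ((fun q : Fin m × Fin n => ξ q.1 q.2 ω), (φ ω, fun j => M j ω)))) :=
      (hTκ.integrable_comp hfm.aestronglyMeasurable).mpr hintκ
    have hμκ : ∫ ω, p ω w * φ ω u * ξ u w ω * M i ω u w ∂μ =
        ∫ s, supsupF m n k α i u w s ∂(μ.map (fun ω =>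
          ((fun q : Fin m × Fin n => ξ q.1 q.2 ω), (φ ω, fun j => M j ω)))) := by
      rw [integral_map hpair.aemeasurable hfm.aestronglyMeasurable]
      exact integral_congr_ae (Filter.Eventually.of_forall fun ω => (hfc ω).symm)
    have hflip : ∫ s, supsupF m n k α i u w (supsupT m n k u w s)
          ∂(μ.map (fun ω =>
            ((fun q : Fin m × Fin n => ξ q.1 q.2 ω), (φ ω, fun j => M j ω)))) =
        ∫ s, supsupF m n k α i u w s
          ∂(μ.map (fun ω =>
            ((fun q : Fin m × Fin n => ξ q.1 q.2 ω), (φ ω, fun j => M j ω)))) := by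
      rw [← integral_map hTκ.measurable.aemeasurable hfm.aestronglyMeasurable, hTκ.map_eq]
    -- a.e. nonnegativity of the mask coordinates on the law space
    have hms : MeasurableSet {s : (Fin m × Fin n → ℝ) ×
        ((Fin m → ℝ) × (Fin k → Fin m → Fin n → ℝ)) | ∀ j, 0 ≤ s.2.2 j u w} := by
      have hrw : {s : (Fin m × Fin n → ℝ) ×
          ((Fin m → ℝ) × (Fin k → Fin m → Fin n → ℝ)) | ∀ j, 0 ≤ s.2.2 j u w} =
          ⋂ j, {s | 0 ≤ s.2.2 j u w} := by ext s; simp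
      rw [hrw]
      exact MeasurableSet.iInter fun j => measurableSet_le measurable_const
        ((measurable_pi_apply w).comp ((measurable_pi_apply u).comp
          ((measurable_pi_apply j).comp (measurable_snd.comp measurable_snd))))
    have haeb : ∀ᵐ s ∂(μ.map (fun ω =>
        ((fun q : Fin m × Fin n => ξ q.1 q.2 ω), (φ ω, fun j => M j ω)))),
        ∀ j, 0 ≤ s.2.2 j u w := by
      refine (MeasureTheory.ae_map_iff hpair.aemeasurable hms).mpr ?_
      refine Filter.Eventually.of_forall fun ω => ?_
      intro j
      rcases hM01 j ω u w with h | h <;> simp [h]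
    -- conclude
    have hsum : 0 ≤ ∫ s, (supsupF m n k α i u w s +
        supsupF m n k α i u w (supsupT m n k u w s))
        ∂(μ.map (fun ω =>
          ((fun q : Fin m × Fin n => ξ q.1 q.2 ω), (φ ω, fun j => M j ω)))) := by
      refine integral_nonneg_of_ae ?_
      filter_upwards [haeb] with s hs
      exact supsup_pointwise m n k α hα i u w s hs
    rw [integral_add hintκ hintκT, hflip] at hsum
    rw [hμκ]
    linarith
  refine ⟨fun u => key v u, ?_⟩
  rw [integral_finset_sum _ fun w _ => integrable_finset_sum _ fun u _ => hint w u]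
  refine Finset.sum_nonneg fun w _ => ?_
  rw [integral_finset_sum _ fun u _ => hint w u]
  exact Finset.sum_nonneg fun u _ => key w u
end
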